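/- Guaranteed descent of the incremental algorithm: if one iteration consists of (a) a majorization step replacing some entries U_{ij} of U by u*((WX)_{ij}), followed by (b) minimization steps each replacing W by Θᵢ(m*)W where m* exactly minimizes m ↦ ℒ̃ₙ(Θᵢ(m)W, U), then ℒ̃ₙ(W_{new}, U_{new}) ≤ ℒ̃ₙ(W_{old}, U_{old}). -/

import Mathlib

open scoped BigOperators

/-- The surrogate ICA loss `ℒ̃ₙ`. -/
noncomputable def icaSurrogate {p n : ℕ} (f : ℝ → ℝ) (X : Matrix (Fin p) (Fin n) ℝ)
    (W : Matrix (Fin p) (Fin p) ℝ) (U : Matrix (Fin p) (Fin n) ℝ) : ℝ :=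
  -Real.log |W.det| +
    (1 / (n : ℝ)) * ∑ i, ∑ j, (U i j * ((W * X) i j) ^ 2 / 2 + f (U i j))

/-- Guaranteed descent of one iteration of the incremental MM algorithm:
a majorization step replacing some memory entries by their optimal values,
followed by exact partial minimization steps over single rows, decreases `ℒ̃ₙ`. -/
theorem incremental_descent {p n : ℕ} (hn : 0 < n)
    (G f ustar : ℝ → ℝ)
    (hvar : ∀ y u : ℝ, 0 ≤ u → G y ≤ u * y ^ 2 / 2 + f u)
    (hopt : ∀ y : ℝ, 0 ≤ ustar y ∧ G y = ustar y * y ^ 2 / 2 + f (ustar y))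
    (X : Matrix (Fin p) (Fin n) ℝ)
    (Wold : Matrix (Fin p) (Fin p) ℝ)
    (Uold Unew : Matrix (Fin p) (Fin n) ℝ)
    (hUold : ∀ i j, 0 ≤ Uold i j)
    (hmaj : ∀ i j, Unew i j = ustar ((Wold * X) i j) ∨ Unew i j = Uold i j)
    (k : ℕ) (Wseq : ℕ → Matrix (Fin p) (Fin p) ℝ)
    (idx : ℕ → Fin p) (ms : ℕ → Fin p → ℝ)
    (hW0 : Wseq 0 = Wold)
    (hstep : ∀ t, t < k →
      Wseq (t + 1) = Matrix.updateRow 1 (idx t) (ms t) * Wseq t ∧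
      ∀ m' : Fin p → ℝ,
        icaSurrogate f X (Matrix.updateRow 1 (idx t) (ms t) * Wseq t) Unew ≤
        icaSurrogate f X (Matrix.updateRow 1 (idx t) m' * Wseq t) Unew)
    (Wnew : Matrix (Fin p) (Fin p) ℝ) (hWnew : Wnew = Wseq k) :
    icaSurrogate f X Wnew Unew ≤ icaSurrogate f X Wold Uold := by
  -- Step 1: majorization decreases the loss with W = Wold
  have hmajle : icaSurrogate f X Wold Unew ≤ icaSurrogate f X Wold Uold := by
    unfold icaSurrogate
    refine add_le_add_right (mul_le_mul_of_nonneg_left ?_ (by positivity)) _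
    refine Finset.sum_le_sum fun i _ => Finset.sum_le_sum fun j _ => ?_
    rcases hmaj i j with h | h
    · rw [h]
      calc ustar ((Wold * X) i j) * ((Wold * X) i j) ^ 2 / 2
            + f (ustar ((Wold * X) i j))
          = G ((Wold * X) i j) := ((hopt _).2).symm
        _ ≤ _ := hvar _ _ (hUold i j)
    · rw [h]
  -- Step 2: each minimization step decreases the loss
  have hseq : ∀ t, t ≤ k →
      icaSurrogate f X (Wseq t) Unew ≤ icaSurrogate f X Wold Unew := by
    intro t
    induction t with
    | zero => intro _; rw [hW0]
    | succ t ih =>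
      intro ht
      obtain ⟨heq, hmin⟩ := hstep t (Nat.lt_of_succ_le ht)
      calc icaSurrogate f X (Wseq (t + 1)) Unew
          = icaSurrogate f X (Matrix.updateRow 1 (idx t) (ms t) * Wseq t) Unew := by
            rw [heq]
        _ ≤ icaSurrogate f X (Matrix.updateRow 1 (idx t) ((1 : Matrix (Fin p) (Fin p) ℝ) (idx t)) * Wseq t) Unew :=
            hmin _
        _ = icaSurrogate f X (Wseq t) Unew := by
            rw [Matrix.updateRow_eq_self, Matrix.one_mul]
        _ ≤ icaSurrogate f X Wold Unew := ih (le_of_lt (Nat.lt_of_succ_le ht))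
  calc icaSurrogate f X Wnew Unew
      = icaSurrogate f X (Wseq k) Unew := by rw [hWnew]
    _ ≤ icaSurrogate f X Wold Unew := hseq k le_rfl
    _ ≤ icaSurrogate f X Wold Uold := hmajle
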